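/- arXiv:1903.11209 — 6 statements merged into one kernel-verified Lean document; each statement's English description precedes it below -/
import Mathlib

section
/- Each unreduced Burau matrix β(σ_i) satisfies β(σ_i)* J β(σ_i) = J, where * denotes conjugate-transpose with respect to the involution of Λ sending t to t⁻¹, and J is the Hermitian matrix with diagonal entries 1, entries -t below the diagonal, and entries -t⁻¹ above the diagonal. -/
open LaurentPolynomial Matrix

/-- `t ∈ ℤ[t,t⁻¹]`. -/
noncomputable def tt : LaurentPolynomial ℤ := T 1

/-- The unreduced Burau matrix `β(σᵢ)` (0-indexed: block at rows/columns `i, i+1`). -/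
noncomputable def burau (n i : ℕ) : Matrix (Fin n) (Fin n) (LaurentPolynomial ℤ) :=
  Matrix.of fun a b =>
    if (a : ℕ) = i ∧ (b : ℕ) = i then 1 - tt
    else if (a : ℕ) = i ∧ (b : ℕ) = i + 1 then 1
    else if (a : ℕ) = i + 1 ∧ (b : ℕ) = i then tt
    else if (a : ℕ) = i + 1 ∧ (b : ℕ) = i + 1 then 0
    else if a = b then 1 else 0

/-- Conjugate-transpose with respect to the involution `t ↦ t⁻¹` of `ℤ[t,t⁻¹]`. -/
noncomputable def starM {n : ℕ} (A : Matrix (Fin n) (Fin n) (LaurentPolynomial ℤ)) :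
    Matrix (Fin n) (Fin n) (LaurentPolynomial ℤ) :=
  Matrix.of fun a b => LaurentPolynomial.invert (A b a)

/-- Squier's Hermitian form: `1` on the diagonal, `-t` below, `-t⁻¹` above. -/
noncomputable def JMat (n : ℕ) : Matrix (Fin n) (Fin n) (LaurentPolynomial ℤ) :=
  Matrix.of fun a b =>
    if a = b then 1 else if b < a then -tt else -(T (-1))


section BurauAux

open Finset

lemma sum_one' {R : Type*} [AddCommMonoid R] {n : ℕ} (j : Fin n) (f : Fin n → R)
    (h0 : ∀ x, x ≠ j → f x = 0) : ∑ x, f x = f j :=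
  Finset.sum_eq_single_of_mem j (Finset.mem_univ j) (fun x _ hx => h0 x hx)

lemma sum_two' {R : Type*} [AddCommMonoid R] {n : ℕ} (j k : Fin n) (hjk : j ≠ k)
    (f : Fin n → R) (h0 : ∀ x, x ≠ j → x ≠ k → f x = 0) : ∑ x, f x = f j + f k := by
  rw [← Finset.sum_subset (Finset.subset_univ ({j, k} : Finset (Fin n)))]
  · rw [Finset.sum_pair hjk]
  · intro x _ hx
    simp only [Finset.mem_insert, Finset.mem_singleton, not_or] at hx
    exact h0 x hx.1 hx.2

lemma burau_row_i {n i : ℕ} (x b : Fin n) (hx : (x : ℕ) = i) :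
    burau n i x b = if (b : ℕ) = i then 1 - tt else if (b : ℕ) = i + 1 then 1 else 0 := by
  rcases eq_or_ne ((b : ℕ)) i with hb | hb
  · simp [burau, hx, hb]
  · rcases eq_or_ne ((b : ℕ)) (i + 1) with hb2 | hb2
    · simp [burau, hx, hb, hb2]
    · have hxb : x ≠ b := fun e => hb (e ▸ hx)
      simp [burau, hx, hb, hb2, hxb]

lemma burau_row_i1 {n i : ℕ} (x b : Fin n) (hx : (x : ℕ) = i + 1) :
    burau n i x b = if (b : ℕ) = i then tt else 0 := by
  have hx' : (x : ℕ) ≠ i := by omega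
  rcases eq_or_ne ((b : ℕ)) i with hb | hb
  · simp [burau, hx, hx', hb]
  · rcases eq_or_ne ((b : ℕ)) (i + 1) with hb2 | hb2
    · simp [burau, hx, hx', hb, hb2]
    · have hxb : x ≠ b := fun e => hb2 (e ▸ hx)
      simp [burau, hx, hx', hb, hb2, hxb]

lemma burau_row_other {n i : ℕ} (x b : Fin n) (hx1 : (x : ℕ) ≠ i) (hx2 : (x : ℕ) ≠ i + 1) :
    burau n i x b = if x = b then 1 else 0 := by
  rcases eq_or_ne x b with hb | hb
  · subst hb; simp [burau, hx1, hx2]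
  · simp [burau, hx1, hx2, hb]

lemma J_diag {n : ℕ} (a : Fin n) : JMat n a a = 1 := by simp [JMat]

lemma J_lt {n : ℕ} {a b : Fin n} (hab : a < b) : JMat n a b = -(T (-1)) := by
  simp [JMat, hab.ne, not_lt.mpr hab.le]

lemma J_gt {n : ℕ} {a b : Fin n} (hab : b < a) : JMat n a b = -tt := by
  simp [JMat, hab.ne', hab]

lemma invert_one_sub_tt : LaurentPolynomial.invert (1 - tt) = 1 - T (-1) := by
  rw [map_sub, _root_.map_one, tt, invert_T]

lemma invert_tt : LaurentPolynomial.invert tt = T (-1) := by rw [tt, invert_T]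

end BurauAux

/-- Each Burau matrix is unitary for the Hermitian form `J`: `β(σᵢ)* J β(σᵢ) = J`. -/
theorem burau_unitary (n i : ℕ) (h : i + 1 < n) :
    starM (burau n i) * JMat n * burau n i = JMat n := by
  have hi : i < n := Nat.lt_of_succ_lt h
  set i1 : Fin n := ⟨i, hi⟩ with hi1def
  set i2 : Fin n := ⟨i + 1, h⟩ with hi2def
  have h12 : i1 ≠ i2 := by simp [Fin.ext_iff, hi1def, hi2def]
  have h12' : i1 < i2 := by exact Fin.mk_lt_mk.mpr (Nat.lt_succ_self i)
  have ht : (T (-1) : LaurentPolynomial ℤ) * tt = 1 := by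
    rw [tt, ← T_add]; norm_num
  refine Matrix.ext fun a b => ?_
  rw [Matrix.mul_apply]
  have key : ∀ y : Fin n, (starM (burau n i) * JMat n) a y =
      if (a : ℕ) = i then (1 - T (-1)) * JMat n i1 y + T (-1) * JMat n i2 y
      else if (a : ℕ) = i + 1 then JMat n i1 y
      else JMat n a y := by
    intro y
    rw [Matrix.mul_apply]
    rcases eq_or_ne ((a : ℕ)) i with ha | ha
    · rw [if_pos ha, sum_two' i1 i2 h12]
      · simp only [starM, Matrix.of_apply]
        rw [burau_row_i (n := n) (i := i) i1 a rfl, burau_row_i1 (n := n) (i := i) i2 a rfl,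
          if_pos ha, if_pos ha, invert_one_sub_tt, invert_tt]
      · intro x hx1 hx2
        have hx1' : (x : ℕ) ≠ i := fun e => hx1 (by ext; exact e)
        have hx2' : (x : ℕ) ≠ i + 1 := fun e => hx2 (by ext; exact e)
        have hxa : x ≠ a := fun e => hx1' (by rw [e]; exact ha)
        simp only [starM, Matrix.of_apply]
        rw [burau_row_other x a hx1' hx2', if_neg hxa, map_zero, zero_mul]
    · rcases eq_or_ne ((a : ℕ)) (i + 1) with ha2 | ha2
      · rw [if_neg ha, if_pos ha2, sum_one' i1]
        · simp only [starM, Matrix.of_apply]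
          rw [burau_row_i (n := n) (i := i) i1 a rfl, if_neg ha, if_pos ha2, _root_.map_one, one_mul]
        · intro x hx1
          have hx1' : (x : ℕ) ≠ i := fun e => hx1 (by ext; exact e)
          simp only [starM, Matrix.of_apply]
          rcases eq_or_ne ((x : ℕ)) (i + 1) with hx2' | hx2'
          · rw [burau_row_i1 x a hx2', if_neg ha, map_zero, zero_mul]
          · have hxa : x ≠ a := fun e => hx2' (by rw [e]; exact ha2)
            rw [burau_row_other x a hx1' hx2', if_neg hxa, map_zero, zero_mul]
      · rw [if_neg ha, if_neg ha2, sum_one' a]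
        · simp only [starM, Matrix.of_apply]
          rw [burau_row_other a a ha ha2, if_pos rfl, _root_.map_one, one_mul]
        · intro x hxa
          simp only [starM, Matrix.of_apply]
          rcases eq_or_ne ((x : ℕ)) i with hx1' | hx1'
          · rw [burau_row_i x a hx1', if_neg ha, if_neg ha2, map_zero, zero_mul]
          · rcases eq_or_ne ((x : ℕ)) (i + 1) with hx2' | hx2'
            · rw [burau_row_i1 x a hx2', if_neg ha, map_zero, zero_mul]
            · rw [burau_row_other x a hx1' hx2', if_neg hxa, map_zero, zero_mul]
  simp only [key]
  rcases eq_or_ne ((b : ℕ)) i with hb | hb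
  · have hbb : b = i1 := by ext; exact hb
    subst hbb
    rw [sum_two' i1 i2 h12]
    · rw [burau_row_i (n := n) (i := i) i1 i1 rfl, burau_row_i1 (n := n) (i := i) i2 i1 rfl,
        if_pos (show ((i1 : Fin n) : ℕ) = i from rfl),
        if_pos (show ((i1 : Fin n) : ℕ) = i from rfl)]
      rcases eq_or_ne ((a : ℕ)) i with ha | ha
      · have haa : a = i1 := by ext; exact ha
        rw [if_pos ha, if_pos ha, haa, J_diag, J_lt h12', J_gt h12', J_diag]
        linear_combination (tt + (T (-1) : LaurentPolynomial ℤ)) * ht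
      · rcases eq_or_ne ((a : ℕ)) (i + 1) with ha2 | ha2
        · have haa : a = i2 := by ext; exact ha2
          rw [if_neg ha, if_neg ha, if_pos ha2, if_pos ha2, haa, J_diag, J_lt h12', J_gt h12']
          linear_combination (-1 : LaurentPolynomial ℤ) * ht
        · rw [if_neg ha, if_neg ha, if_neg ha2, if_neg ha2]
          have he : JMat n a i2 = JMat n a i1 := by
            rcases lt_or_gt_of_ne (show (a : ℕ) ≠ i from ha) with hlt | hgt
            · rw [J_lt (show a < i1 from hlt), J_lt (show a < i2 by
                simp only [Fin.lt_def]; omega)]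
            · rw [J_gt (show i1 < a from hgt), J_gt (show i2 < a by
                simp only [Fin.lt_def, hi1def, hi2def, Fin.val_mk] at hgt ⊢; omega)]
          rw [he]; ring
    · intro y hy1 hy2
      have hy1' : (y : ℕ) ≠ i := fun e => hy1 (by ext; exact e)
      have hy2' : (y : ℕ) ≠ i + 1 := fun e => hy2 (by ext; exact e)
      rw [burau_row_other y i1 hy1' hy2', if_neg hy1, mul_zero]
  · rcases eq_or_ne ((b : ℕ)) (i + 1) with hb2 | hb2
    · have hbb : b = i2 := by ext; exact hb2
      subst hbb
      rw [sum_one' i1]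
      · rw [burau_row_i (n := n) (i := i) i1 i2 rfl,
          if_neg (show ¬ ((i2 : Fin n) : ℕ) = i by simp [hi2def]),
          if_pos (show ((i2 : Fin n) : ℕ) = i + 1 from rfl), mul_one]
        rcases eq_or_ne ((a : ℕ)) i with ha | ha
        · have haa : a = i1 := by ext; exact ha
          rw [if_pos ha, haa, J_diag, J_gt h12', J_lt h12']
          linear_combination (-1 : LaurentPolynomial ℤ) * ht
        · rcases eq_or_ne ((a : ℕ)) (i + 1) with ha2 | ha2
          · have haa : a = i2 := by ext; exact ha2
            rw [if_neg ha, if_pos ha2, haa, J_diag, J_diag]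
          · rw [if_neg ha, if_neg ha2]
            rcases lt_or_gt_of_ne (show (a : ℕ) ≠ i from ha) with hlt | hgt
            · rw [J_lt (show a < i1 from hlt), J_lt (show a < i2 by
                simp only [Fin.lt_def]; omega)]
            · rw [J_gt (show i1 < a from hgt), J_gt (show i2 < a by
                simp only [Fin.lt_def]; omega)]
      · intro y hy1
        have hy1' : (y : ℕ) ≠ i := fun e => hy1 (by ext; exact e)
        rcases eq_or_ne ((y : ℕ)) (i + 1) with hy2' | hy2'
        · rw [burau_row_i1 y i2 hy2', if_neg (show ¬ ((i2 : Fin n) : ℕ) = i by simp [hi2def]), mul_zero]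
        · have hyb : y ≠ i2 := fun e => hy2' (by rw [e])
          rw [burau_row_other y i2 hy1' hy2', if_neg hyb, mul_zero]
    · rw [sum_one' b]
      · rw [burau_row_other b b hb hb2, if_pos rfl, mul_one]
        rcases eq_or_ne ((a : ℕ)) i with ha | ha
        · have haa : a = i1 := by ext; exact ha
          rw [if_pos ha, haa]
          have he : JMat n i2 b = JMat n i1 b := by
            rcases Nat.lt_or_ge ((b : ℕ)) i with hlt | hge
            · rw [J_gt (show b < i1 from hlt), J_gt (show b < i2 by
                simp only [Fin.lt_def]; omega)]
            · have hgt : i + 1 < (b : ℕ) := by omega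
              rw [J_lt (show i1 < b by simp only [Fin.lt_def]; omega),
                J_lt (show i2 < b by simp only [Fin.lt_def]; omega)]
          rw [he]; ring
        · rcases eq_or_ne ((a : ℕ)) (i + 1) with ha2 | ha2
          · have haa : a = i2 := by ext; exact ha2
            rw [if_neg ha, if_pos ha2, haa]
            rcases Nat.lt_or_ge ((b : ℕ)) i with hlt | hge
            · rw [J_gt (show b < i1 from hlt), J_gt (show b < i2 by
                simp only [Fin.lt_def]; omega)]
            · have hgt : i + 1 < (b : ℕ) := by omega
              rw [J_lt (show i1 < b by simp only [Fin.lt_def]; omega),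
                J_lt (show i2 < b by simp only [Fin.lt_def]; omega)]
          · rw [if_neg ha, if_neg ha2]
      · intro y hyb
        rcases eq_or_ne ((y : ℕ)) i with hy1' | hy1'
        · rw [burau_row_i y b hy1', if_neg hb, if_neg hb2, mul_zero]
        · rcases eq_or_ne ((y : ℕ)) (i + 1) with hy2' | hy2'
          · rw [burau_row_i1 y b hy2', if_neg hb, mul_zero]
          · rw [burau_row_other y b hy1' hy2', if_neg hyb, mul_zero]
end

section
/- Let A ∈ GL_n(Λ) satisfy A* J A = J, (1,...,1)·A = (1,...,1), and A ≡ I mod s^k for k ≥ 1, where s = t-1. Write A = I + s^k A' and let M = A' mod s ∈ M_n(ℤ). Then Mᵀ = (-1)^{k+1} M; i.e., M is symmetric if k is odd and skew-symmetric if k is even. -/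
open LaurentPolynomial Matrix

/-- `s = t - 1`. -/
noncomputable def ss : LaurentPolynomial ℤ := tt - 1

lemma r_T (r : LaurentPolynomial ℤ →+* ℤ) (hr : r tt = 1) : ∀ m : ℤ, r (T m) = 1 := by
  intro m
  induction m using Int.induction_on with
  | zero => simp [T_zero]
  | succ n ih =>
      have h : (T ((n : ℤ) + 1) : LaurentPolynomial ℤ) = T n * T 1 := T_add n 1
      rw [h, _root_.map_mul, ih, ← tt, hr, mul_one]
  | pred n ih =>
      have h1 : (T (-(n : ℤ) - 1) : LaurentPolynomial ℤ) * T 1 = T (-(n : ℤ)) := by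
        rw [← T_add]; ring_nf
      have h2 := congrArg r h1
      rw [_root_.map_mul, ← tt, hr, mul_one, ih] at h2
      exact h2

lemma r_invert (r : LaurentPolynomial ℤ →+* ℤ) (hr : r tt = 1) (p : LaurentPolynomial ℤ) :
    r (invert p) = r p := by
  induction p using LaurentPolynomial.induction_on' with
  | add p q hp hq => simp [map_add, hp, hq]
  | C_mul_T m a =>
      rw [_root_.map_mul, invert_C, invert_T, _root_.map_mul, _root_.map_mul, r_T r hr, r_T r hr]

lemma ss_ne_zero : ss ≠ 0 := by
  intro h
  have h1 : (T 1 - 1 : LaurentPolynomial ℤ).coeff 1 = (0 : LaurentPolynomial ℤ).coeff 1 := by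
    rw [← tt, ← ss, h]
  have hT : (T 1 : LaurentPolynomial ℤ).coeff 1 = 1 := by simp
  have hone : (1 : LaurentPolynomial ℤ).coeff 1 = 0 := by
    have h0 := T_apply (R := ℤ) 1 0; rw [T_zero] at h0; simpa using h0
  simp [hT, hone] at h1

/-- If `A* J A = J`, `(1,…,1)·A = (1,…,1)`, and `A = I + s^k A'` with `k ≥ 1`,
then `M = A' mod s` satisfies `Mᵀ = (-1)^{k+1} M`. -/
theorem coeff_symmetry (n k : ℕ) (hk : 1 ≤ k)
    (A : GL (Fin n) (LaurentPolynomial ℤ))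
    (A' : Matrix (Fin n) (Fin n) (LaurentPolynomial ℤ))
    (hJ : starM (A : Matrix (Fin n) (Fin n) (LaurentPolynomial ℤ)) * JMat n *
        (A : Matrix (Fin n) (Fin n) (LaurentPolynomial ℤ)) = JMat n)
    (h1 : Matrix.vecMul (fun _ => 1)
        (A : Matrix (Fin n) (Fin n) (LaurentPolynomial ℤ)) = fun _ => 1)
    (hA : (A : Matrix (Fin n) (Fin n) (LaurentPolynomial ℤ)) = 1 + ss ^ k • A')
    (r : LaurentPolynomial ℤ →+* ℤ) (hr : r tt = 1) :
    (A'.map r)ᵀ = ((-1 : ℤ) ^ (k + 1)) • A'.map r := by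
  set c : LaurentPolynomial ℤ := ss ^ k with hc
  set B := starM A' with hB
  set J := JMat n with hJdef
  set M := A'.map r with hM
  have hrs : r ss = 0 := by
    have h : r ss = r tt - r 1 := by rw [ss, map_sub]
    rw [h, hr, _root_.map_one]; ring
  have hrc : r c = 0 := by
    rw [hc, _root_.map_pow, hrs, zero_pow (by omega)]
  have hcne : c ≠ 0 := pow_ne_zero _ ss_ne_zero
  -- star of A
  have hstar : starM (A : Matrix (Fin n) (Fin n) (LaurentPolynomial ℤ))
      = 1 + invert c • B := by
    rw [hA]
    refine Matrix.ext fun a b => ?_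
    show invert ((1 + c • A') b a) = (1 + invert c • B) a b
    rw [Matrix.add_apply, Matrix.add_apply, map_add, Matrix.smul_apply, Matrix.smul_apply,
      smul_eq_mul, smul_eq_mul, _root_.map_mul]
    congr 1
    by_cases h : a = b
    · subst h; simp [Matrix.one_apply]
    · rw [Matrix.one_apply_ne (fun hh => h hh.symm), Matrix.one_apply_ne h, map_zero]
  -- key identity over Λ
  have key : c • (J * A') + invert c • (B * J) + (invert c * c) • (B * J * A') = 0 := by
    have h := hJ
    rw [hstar, hA] at h
    have expand : (1 + invert c • B) * J * (1 + c • A')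
        = J + (c • (J * A') + invert c • (B * J) + (invert c * c) • (B * J * A')) := by
      simp only [Matrix.add_mul, Matrix.mul_add, Matrix.one_mul, Matrix.mul_one,
        Matrix.smul_mul, Matrix.mul_smul, smul_add, smul_smul, Matrix.mul_assoc]
      rw [mul_comm c (invert c)]
      abel
    rw [expand] at h
    exact add_eq_left.mp h
  -- invert c = e * c
  have hσ : invert ss = -(ss * T (-1)) := by
    have hT : (T 1 : LaurentPolynomial ℤ) * T (-1) = 1 := by rw [← T_add]; norm_num
    simp only [ss, tt, _root_.map_sub, invert_T, _root_.map_one]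
    rw [sub_mul, one_mul, hT]
    ring
  set e : LaurentPolynomial ℤ := (-1 : LaurentPolynomial ℤ) ^ k * T (-(k : ℤ)) with he
  have hre : r e = (-1 : ℤ) ^ k := by
    rw [he, _root_.map_mul, _root_.map_pow, map_neg, _root_.map_one, r_T r hr]; ring
  have hc' : invert c = e * c := by
    rw [hc, _root_.map_pow, hσ, neg_pow, mul_pow, T_pow, he]
    have h : ((k : ℕ) * (-1 : ℤ)) = -(k : ℤ) := by ring
    rw [h]
    ring
  -- divide by c
  have key2 : J * A' + e • (B * J) + (e * c) • (B * J * A') = 0 := by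
    have hczero : c • (J * A' + e • (B * J) + (e * c) • (B * J * A')) = 0 := by
      have hexp : c • (J * A' + e • (B * J) + (e * c) • (B * J * A'))
          = c • (J * A') + (e * c) • (B * J) + ((e * c) * c) • (B * J * A') := by
        rw [smul_add, smul_add, smul_smul, smul_smul, mul_comm c e, mul_comm c (e * c)]
      rw [hexp, ← hc']
      exact key
    refine Matrix.ext fun a b => ?_
    have h0 := congrFun (congrFun hczero a) b
    simp only [Matrix.smul_apply, smul_eq_mul, Matrix.zero_apply] at h0
    rcases mul_eq_zero.mp h0 with h | h
    · exact absurd h hcne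
    · simpa using h
  -- map by r
  have hmapsmul : ∀ (x : LaurentPolynomial ℤ) (N : Matrix (Fin n) (Fin n) (LaurentPolynomial ℤ)),
      (x • N).map r = r x • N.map r := by
    intro x N; ext a b; simp [Matrix.map_apply, Matrix.smul_apply]
  have hBmap : B.map r = Mᵀ := by
    ext a b
    simp [hB, starM, Matrix.map_apply, hM, r_invert r hr]
  set J₀ := J.map r with hJ0def
  have hJ0 : ∀ a b : Fin n, J₀ a b = if a = b then 1 else -1 := by
    intro a b
    have hrT1 : r (T (-1)) = 1 := r_T r hr (-1)
    simp only [hJ0def, Matrix.map_apply, hJdef, JMat, Matrix.of_apply]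
    split_ifs with h h'
    · simp
    · simp [hr]
    · simp [hrT1]
  have hmapadd : ∀ (N P : Matrix (Fin n) (Fin n) (LaurentPolynomial ℤ)),
      (N + P).map r = N.map r + P.map r := by
    intro N P; ext a b; simp [Matrix.map_apply, Matrix.add_apply]
  have hmain : J₀ * M + ((-1 : ℤ) ^ k) • (Mᵀ * J₀) = 0 := by
    have h : (J * A' + e • (B * J) + (e * c) • (B * J * A')).map r
        = (0 : Matrix (Fin n) (Fin n) (LaurentPolynomial ℤ)).map r := by rw [key2]
    rw [hmapadd, hmapadd, hmapsmul, hmapsmul, Matrix.map_mul, Matrix.map_mul,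
      Matrix.map_mul, hBmap, hre, _root_.map_mul, hrc, mul_zero, zero_smul, add_zero] at h
    have hz : ((0 : Matrix (Fin n) (Fin n) (LaurentPolynomial ℤ)).map r) = 0 := by
      ext a b; simp [Matrix.map_apply]
    rw [hz] at h
    exact h
  -- column sums vanish
  have hsumΛ : ∀ b : Fin n, ∑ a, A' a b = 0 := by
    intro b
    have h := h1
    rw [hA, Matrix.vecMul_add, Matrix.vecMul_one] at h
    have h2 := congrFun h b
    simp only [Pi.add_apply] at h2
    have h3 : ((fun _ => (1 : LaurentPolynomial ℤ)) ᵥ* (c • A')) b = 0 := by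
      have := add_eq_left.mp h2
      exact this
    have h4 : c * ∑ a, A' a b = 0 := by
      rw [← h3]
      simp [Matrix.vecMul, dotProduct, Matrix.smul_apply, Finset.mul_sum]
    rcases mul_eq_zero.mp h4 with h | h
    · exact absurd h hcne
    · exact h
  have hsum : ∀ b : Fin n, ∑ a, M a b = 0 := by
    intro b
    have h := congrArg r (hsumΛ b)
    rw [map_sum, _root_.map_zero] at h
    simpa [hM, Matrix.map_apply] using h
  -- conclude entrywise
  ext a b
  have hab := congrFun (congrFun hmain a) b
  simp only [Matrix.add_apply, Matrix.smul_apply, Matrix.mul_apply,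
    Matrix.transpose_apply, Matrix.zero_apply, smul_eq_mul] at hab
  have hS1 : ∑ x, J₀ a x * M x b = 2 * M a b := by
    have hcong : ∀ x : Fin n, J₀ a x * M x b = 2 * (if a = x then M x b else 0) - M x b := by
      intro x; rw [hJ0]; split_ifs <;> ring
    rw [Finset.sum_congr rfl (fun x _ => hcong x), Finset.sum_sub_distrib,
      ← Finset.mul_sum, Finset.sum_ite_eq, hsum b]
    simp
  have hS2 : ∑ x, M x a * J₀ x b = 2 * M b a := by
    have hcong : ∀ x : Fin n, M x a * J₀ x b = 2 * (if x = b then M x a else 0) - M x a := by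
      intro x; rw [hJ0]; split_ifs <;> ring
    rw [Finset.sum_congr rfl (fun x _ => hcong x), Finset.sum_sub_distrib,
      ← Finset.mul_sum, Finset.sum_ite_eq', hsum a]
    simp
  rw [hS1, hS2] at hab
  show M b a = (-1 : ℤ) ^ (k + 1) * M a b
  rcases Nat.even_or_odd k with hke | hko
  · rw [hke.neg_one_pow] at hab
    rw [Odd.neg_one_pow (by exact hke.add_one)]
    linarith
  · rw [hko.neg_one_pow] at hab
    rw [Even.neg_one_pow (by exact hko.add_one)]
    linarith
end

section
/- Let A ∈ GL_n(ℤ[t,t⁻¹]) satisfy A ≡ I mod s^k for some k ≥ 2, where s = t-1. Then det(A) = 1, and writing A = I + s^k A', the trace tr(A') is divisible by s^k; in particular the integer trace of (A' mod s) is 0. -/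
open LaurentPolynomial Matrix

open TrivSqZeroExt in
/-- `a ↦ 1 + a ε` as a monoid hom `Multiplicative ℤ →* ℤ[ε]`. -/
noncomputable def gdual : Multiplicative ℤ →* DualNumber ℤ where
  toFun a := inl 1 + inr (Multiplicative.toAdd a)
  map_one' := by ext <;> simp
  map_mul' a b := by
    ext
    · simp [TrivSqZeroExt.fst_mul]
    · simp [TrivSqZeroExt.snd_mul]
      ring

/-- The evaluation `t ↦ 1 + ε` into dual numbers. -/
noncomputable def ψ : LaurentPolynomial ℤ →ₐ[ℤ] DualNumber ℤ :=
  AddMonoidAlgebra.lift ℤ _ ℤ gdual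

open TrivSqZeroExt in
lemma ψ_T (a : ℤ) : ψ (T a) = inl 1 + inr a := by
  have : (T a : LaurentPolynomial ℤ) = AddMonoidAlgebra.single a 1 := rfl
  rw [this]
  show (AddMonoidAlgebra.lift ℤ _ ℤ gdual) (AddMonoidAlgebra.single a 1) = _
  rw [AddMonoidAlgebra.lift_single]
  simp [gdual]

open TrivSqZeroExt in
lemma ψ_ss : ψ ss = inr 1 := by
  simp [ss, tt, map_sub, ψ_T, _root_.map_one]

open Polynomial in
/-- Units of `ℤ[t,t⁻¹]` congruent to `1` mod `s^2` are `1`. -/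
lemma unit_cong_one (u : LaurentPolynomial ℤ) (hu : IsUnit u)
    (hdvd : ss ^ 2 ∣ u - 1) : u = 1 := by
  -- first, classify the unit as `C c * T a`
  obtain ⟨v, hv⟩ := hu.exists_right_inv
  obtain ⟨n, p, hp⟩ := LaurentPolynomial.exists_T_pow u
  obtain ⟨m, q, hq⟩ := LaurentPolynomial.exists_T_pow v
  have hpq : p * q = X ^ (n + m) := by
    apply Polynomial.toLaurent_injective
    rw [_root_.map_mul, hp, hq, Polynomial.toLaurent_X_pow]
    rw [mul_mul_mul_comm, hv, one_mul, ← LaurentPolynomial.T_add]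
    norm_num
  have hXdvd : p ∣ X ^ (n + m) := ⟨q, hpq.symm⟩
  obtain ⟨i, -, hassoc⟩ := (dvd_prime_pow Polynomial.prime_X (n + m)).mp hXdvd
  obtain ⟨w, hw⟩ := hassoc
  obtain ⟨c, hc, hCc⟩ := Polynomial.isUnit_iff.mp w.isUnit
  -- p * C c = X ^ i
  rw [← hCc] at hw
  have hcc : c * c = 1 := by
    rcases Int.isUnit_iff.mp hc with h | h <;> simp [h]
  have hpXc : p = X ^ i * Polynomial.C c := by
    have h2 : p * (Polynomial.C c * Polynomial.C c) = X ^ i * Polynomial.C c := by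
      rw [← mul_assoc, hw]
    rwa [← Polynomial.C_mul, hcc, Polynomial.C_1, mul_one] at h2
  -- hence u = C c * T (i - n)
  have hu2 : u = LaurentPolynomial.C c * T ((i : ℤ) - n) := by
    have h1 : Polynomial.toLaurent p = LaurentPolynomial.C c * T i := by
      rw [hpXc, _root_.map_mul, Polynomial.toLaurent_X_pow, Polynomial.toLaurent_C, mul_comm]
    rw [h1] at hp
    calc u = u * (T (n : ℤ) * T (-(n : ℤ))) := by
              rw [← LaurentPolynomial.T_add]; simp
      _ = (u * T (n : ℤ)) * T (-(n : ℤ)) := by ring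
      _ = (LaurentPolynomial.C c * T (i : ℤ)) * T (-(n : ℤ)) := by rw [hp]
      _ = LaurentPolynomial.C c * T ((i : ℤ) - n) := by
              rw [mul_assoc, ← LaurentPolynomial.T_add, sub_eq_add_neg]
  -- now apply ψ
  have hψu : ψ u = 1 := by
    obtain ⟨e, he⟩ := hdvd
    have : ψ u - 1 = ψ (ss ^ 2) * ψ e := by
      rw [← _root_.map_mul, ← he, map_sub, _root_.map_one]
    rw [map_pow, ψ_ss, pow_two, TrivSqZeroExt.inr_mul_inr] at this
    rw [zero_mul] at this
    linear_combination (norm := module) this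
  have hCcast : (LaurentPolynomial.C c : LaurentPolynomial ℤ) = (c : LaurentPolynomial ℤ) := by
    simpa using (map_intCast LaurentPolynomial.C c)
  rw [hu2, hCcast, _root_.map_mul, map_intCast, ψ_T] at hψu
  have hfst := congrArg TrivSqZeroExt.fst hψu
  have hsnd := congrArg TrivSqZeroExt.snd hψu
  simp [TrivSqZeroExt.fst_mul, TrivSqZeroExt.snd_mul] at hfst hsnd
  -- hfst : c = 1, hsnd : c * (i - n) = 0 (up to smul)
  rw [hu2]
  have ha : (i : ℤ) - n = 0 := by
    rw [hfst] at hsnd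
    simpa using hsnd
  rw [ha, hfst, LaurentPolynomial.T_zero]
  simp

/-- If `A ≡ I mod s^k` with `k ≥ 2`, then `det A = 1`, and writing `A = I + s^k A'`,
the trace of `A'` is divisible by `s^k`; in particular `tr(A' mod s) = 0`. -/
theorem det_one_and_trace (n k : ℕ) (hk : 2 ≤ k)
    (A : GL (Fin n) (LaurentPolynomial ℤ))
    (A' : Matrix (Fin n) (Fin n) (LaurentPolynomial ℤ))
    (hA : (A : Matrix (Fin n) (Fin n) (LaurentPolynomial ℤ)) = 1 + ss ^ k • A')
    (r : LaurentPolynomial ℤ →+* ℤ) (hr : r tt = 1) :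
    (A : Matrix (Fin n) (Fin n) (LaurentPolynomial ℤ)).det = 1 ∧
      ss ^ k ∣ A'.trace ∧ (A'.map r).trace = 0 := by
  set E := (Matrix.det (1 + (Polynomial.X : Polynomial (LaurentPolynomial ℤ)) •
      A'.map Polynomial.C)).divX.divX.eval (ss ^ k) with hE
  have hdet : (A : Matrix (Fin n) (Fin n) (LaurentPolynomial ℤ)).det
      = 1 + A'.trace * ss ^ k + E * (ss ^ k) ^ 2 := by
    rw [hA, Matrix.det_one_add_smul]
  have hunit : IsUnit (A : Matrix (Fin n) (Fin n) (LaurentPolynomial ℤ)).det :=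
    (Matrix.isUnit_iff_isUnit_det _).mp A.isUnit
  have hdvd2 : ss ^ 2 ∣ (A : Matrix (Fin n) (Fin n) (LaurentPolynomial ℤ)).det - 1 := by
    have h1 : ss ^ 2 ∣ ss ^ k := pow_dvd_pow ss hk
    rw [hdet]
    have : (1 : LaurentPolynomial ℤ) + A'.trace * ss ^ k + E * (ss ^ k) ^ 2 - 1
        = ss ^ k * (A'.trace + E * ss ^ k) := by ring
    rw [this]
    exact h1.mul_right _
  have hdet1 : (A : Matrix (Fin n) (Fin n) (LaurentPolynomial ℤ)).det = 1 :=
    unit_cong_one _ hunit hdvd2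
  have hkey : A'.trace = -E * ss ^ k := by
    have h0 : A'.trace * ss ^ k + E * (ss ^ k) ^ 2 = 0 := by
      linear_combination hdet1 - hdet
    have hne : (ss : LaurentPolynomial ℤ) ^ k ≠ 0 := pow_ne_zero _ ss_ne_zero
    apply mul_right_cancel₀ hne
    rw [neg_mul]
    linear_combination h0
  have hdvdk : ss ^ k ∣ A'.trace := ⟨-E, by rw [hkey, mul_comm]⟩
  refine ⟨hdet1, hdvdk, ?_⟩
  have hrss : r ss = 0 := by simp [ss, map_sub, hr]
  have htr : (A'.map r).trace = r A'.trace := by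
    simp [Matrix.trace, Matrix.diag, Matrix.map_apply, map_sum]
  rw [htr]
  obtain ⟨c, hc⟩ := hdvdk
  rw [hc, _root_.map_mul, map_pow, hrss, zero_pow (by omega), zero_mul]
end

section
/- For n ≥ 2, the abelian group G₁ = {M ∈ M_n(ℤ) : M·(1,...,1)ᵀ = 0, Mᵀ = M} is generated by the matrices X_{ij} = E_{ii} + E_{jj} - E_{ij} - E_{ji} for 1 ≤ i < j ≤ n. -/
open Matrix

/-- `X_{ij} = E_{ii} + E_{jj} - E_{ij} - E_{ji}`. -/
def Xmat (n : ℕ) (i j : Fin n) : Matrix (Fin n) (Fin n) ℤ :=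
  Matrix.single i i 1 + Matrix.single j j 1
    - Matrix.single i j 1 - Matrix.single j i 1

/-- `Y_{ijk} = (E_{ij} - E_{ji}) - (E_{ik} - E_{ki}) + (E_{jk} - E_{kj})`. -/
def Ymat (n : ℕ) (i j k : Fin n) : Matrix (Fin n) (Fin n) ℤ :=
  (Matrix.single i j 1 - Matrix.single j i 1)
    - (Matrix.single i k 1 - Matrix.single k i 1)
    + (Matrix.single j k 1 - Matrix.single k j 1)

lemma key_decomp (n : ℕ) (M : Matrix (Fin n) (Fin n) ℤ)
    (h1 : M.mulVec (fun _ => 1) = 0) (h2 : Mᵀ = M) :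
    M = ∑ p ∈ Finset.univ.filter (fun p : Fin n × Fin n => p.1 < p.2),
        (-M p.1 p.2) • Xmat n p.1 p.2 := by
  have hsym : ∀ a b, M b a = M a b := fun a b => congrFun (congrFun h2 a) b
  have hrow : ∀ a, ∑ j, M a j = 0 := fun a => by
    have := congrFun h1 a
    simpa [Matrix.mulVec, dotProduct] using this
  ext a b
  rw [Matrix.sum_apply]
  simp only [Finset.sum_filter, Fintype.sum_prod_type, Matrix.smul_apply, Xmat,
    Matrix.single, Matrix.of_apply, Matrix.sub_apply, Matrix.add_apply,
    smul_eq_mul]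
  rcases eq_or_ne a b with rfl | hab
  · symm
    calc ∑ i : Fin n, ∑ j : Fin n,
          (if i < j then
            -M i j * ((((if i = a ∧ i = a then 1 else 0) + if j = a ∧ j = a then 1 else 0) -
                if i = a ∧ j = a then 1 else 0) - if j = a ∧ i = a then 1 else 0)
          else 0)
        = ∑ i : Fin n, ∑ j : Fin n,
            ((if i = a then (if a < j then -M a j else 0) else 0) +
             (if j = a then (if i < a then -M i a else 0) else 0)) := by
          refine Finset.sum_congr rfl fun i _ => Finset.sum_congr rfl fun j _ => ?_
          by_cases hij : i < j <;> by_cases hi : i = a <;> by_cases hj : j = a <;>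
            simp_all
      _ = M a a := by
          have T1 : ∑ i : Fin n, ∑ j : Fin n,
              (if i = a then (if a < j then -M a j else 0) else 0)
              = ∑ j : Fin n, (if a < j then -M a j else 0) := by
            rw [Finset.sum_comm]
            simp [Finset.sum_ite_eq']
          have T2 : ∑ i : Fin n, ∑ j : Fin n,
              (if j = a then (if i < a then -M i a else 0) else 0)
              = ∑ i : Fin n, (if i < a then -M i a else 0) := by
            simp [Finset.sum_ite_eq']
          simp only [Finset.sum_add_distrib]
          rw [T1, T2]
          have hpt : ∀ j, M a j = (if a < j then M a j else 0) +
              (if j = a then M a j else 0) + (if j < a then M a j else 0) := by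
            intro j
            rcases lt_trichotomy a j with h | h | h
            · simp [h, h.ne', h.ne, lt_asymm h]
            · simp [h]
            · simp [h, h.ne, h.ne', lt_asymm h]
          have h0 := hrow a
          rw [Finset.sum_congr rfl fun j _ => hpt j, Finset.sum_add_distrib,
            Finset.sum_add_distrib] at h0
          simp only [Finset.sum_ite_eq' Finset.univ a, Finset.mem_univ, if_true] at h0
          have e1 : ∑ j : Fin n, (if a < j then -M a j else 0)
              = -∑ j : Fin n, (if a < j then M a j else 0) := by
            rw [← Finset.sum_neg_distrib]
            exact Finset.sum_congr rfl fun j _ => by split_ifs <;> simp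
          have e2 : ∑ i : Fin n, (if i < a then -M i a else 0)
              = -∑ i : Fin n, (if i < a then M a i else 0) := by
            rw [← Finset.sum_neg_distrib]
            exact Finset.sum_congr rfl fun i _ => by rw [hsym]; split_ifs <;> simp
          have e3 : ∑ j : Fin n, (if j < a then M a j else 0)
              = ∑ i : Fin n, (if i < a then M a i else 0) := rfl
          rw [e1, e2]
          rw [e3] at h0
          linarith
  · have hba : ¬ b = a := fun h => hab h.symm
    rcases hab.lt_or_gt with hlt | hlt
    · symm
      calc ∑ i : Fin n, ∑ j : Fin n,
            (if i < j then
              -M i j * ((((if i = a ∧ i = b then 1 else 0) + if j = a ∧ j = b then 1 else 0) -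
                  if i = a ∧ j = b then 1 else 0) - if j = a ∧ i = b then 1 else 0)
            else 0)
          = ∑ i : Fin n, ∑ j : Fin n, (if i = a then (if j = b then M a b else 0) else 0) := by
            refine Finset.sum_congr rfl fun i _ => Finset.sum_congr rfl fun j _ => ?_
            by_cases hij : i < j <;> by_cases hi : i = a <;> by_cases hj : j = b <;>
              simp_all
            intro h1 h2
            subst h1; subst h2
            exact absurd hij (asymm hlt)
        _ = M a b := by simp [Finset.sum_ite_eq']
    · symm
      calc ∑ i : Fin n, ∑ j : Fin n,
            (if i < j then
              -M i j * ((((if i = a ∧ i = b then 1 else 0) + if j = a ∧ j = b then 1 else 0) -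
                  if i = a ∧ j = b then 1 else 0) - if j = a ∧ i = b then 1 else 0)
            else 0)
          = ∑ i : Fin n, ∑ j : Fin n, (if i = b then (if j = a then M a b else 0) else 0) := by
            refine Finset.sum_congr rfl fun i _ => Finset.sum_congr rfl fun j _ => ?_
            by_cases hij : i < j <;> by_cases hi : i = b <;> by_cases hj : j = a <;>
              simp_all [hsym]
            intro h1 h2
            subst h1; subst h2
            exact absurd hij (asymm hlt)
        _ = M a b := by simp [Finset.sum_ite_eq']

/-- For `n ≥ 2`, the group `G₁` of symmetric integer matrices killing the all-ones
vector is generated by the `X_{ij}`, `i < j`. -/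
theorem G1_generated (n : ℕ) (hn : 2 ≤ n) (M : Matrix (Fin n) (Fin n) ℤ)
    (h1 : M.mulVec (fun _ => 1) = 0) (h2 : Mᵀ = M) :
    M ∈ Submodule.span ℤ {X | ∃ i j : Fin n, i < j ∧ X = Xmat n i j} := by
  rw [key_decomp n M h1 h2]
  refine Submodule.sum_mem _ fun p hp => ?_
  refine Submodule.smul_mem _ _ (Submodule.subset_span ?_)
  exact ⟨p.1, p.2, (Finset.mem_filter.mp hp).2, rfl⟩
end

section
/- For n ≥ 3, the abelian group {M ∈ M_n(ℤ) : M·(1,...,1)ᵀ = 0, Mᵀ = -M} is spanned over ℤ by the matrices Y_{ijk} = (E_{ij} - E_{ji}) - (E_{ik} - E_{ki}) + (E_{jk} - E_{kj}) for 1 ≤ i < j < k ≤ n. -/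
open Matrix

lemma Ymat_apply (n : ℕ) (i j k a b : Fin n) :
    Ymat n i j k a b =
      (if i = a ∧ j = b then (1:ℤ) else 0) - (if j = a ∧ i = b then 1 else 0)
      - (if i = a ∧ k = b then 1 else 0) + (if k = a ∧ i = b then 1 else 0)
      + (if j = a ∧ k = b then 1 else 0) - (if k = a ∧ j = b then 1 else 0) := by
  simp [Ymat, Matrix.single, Matrix.sub_apply, Matrix.add_apply, Matrix.of_apply]
  ring

lemma Ymat_skew (n : ℕ) (i j k a b : Fin n) :
    Ymat n i j k b a = - Ymat n i j k a b := by
  rw [Ymat_apply, Ymat_apply]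
  by_cases h1 : i = a <;> by_cases h2 : j = a <;> by_cases h3 : k = a <;>
    by_cases h4 : i = b <;> by_cases h5 : j = b <;> by_cases h6 : k = b <;>
      simp [h1, h2, h3, h4, h5, h6, and_comm]

/-- For `n ≥ 3`, the group of skew-symmetric integer matrices killing the all-ones
vector is spanned by the `Y_{ijk}`, `i < j < k`. -/
theorem G2_generated (n : ℕ) (hn : 3 ≤ n) (M : Matrix (Fin n) (Fin n) ℤ)
    (h1 : M.mulVec (fun _ => 1) = 0) (h2 : Mᵀ = -M) :
    M ∈ Submodule.span ℤ
      {X | ∃ i j k : Fin n, i < j ∧ j < k ∧ X = Ymat n i j k} := by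
  have hz0 : 0 < n := by omega
  set z : Fin n := ⟨0, hz0⟩ with hzdef
  have hzv : (z : ℕ) = 0 := rfl
  have hskew : ∀ p q : Fin n, M q p = - M p q := by
    intro p q
    have := congrFun (congrFun h2 p) q
    simpa [Matrix.transpose_apply] using this
  have hdiag : ∀ p, M p p = 0 := by
    intro p; have := hskew p p; linarith
  have hrow : ∀ p, ∑ c, M p c = 0 := by
    intro p
    have := congrFun h1 p
    simpa [Matrix.mulVec, dotProduct] using this
  have hN : ∀ a b : Fin n,
      (∑ j, ∑ k, (if z < j ∧ j < k then M j k • Ymat n z j k else 0)) a b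
        = ∑ j, ∑ k, (if z < j ∧ j < k then M j k * Ymat n z j k a b else 0) := by
    intro a b
    simp only [Matrix.sum_apply, apply_ite (fun (m : Matrix (Fin n) (Fin n) ℤ) => m a b),
      Matrix.smul_apply, smul_eq_mul, Matrix.zero_apply]
  have main : ∀ a b : Fin n, a < b →
      (∑ j, ∑ k, (if z < j ∧ j < k then M j k * Ymat n z j k a b else 0)) = M a b := by
    intro a b hab
    by_cases ha : a = z
    · -- a = z, b > z
      subst ha
      have hbz : z < b := hab
      have step : ∀ j k : Fin n,
          (if z < j ∧ j < k then M j k * Ymat n z j k z b else 0)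
            = (if j = b then (if z < j ∧ j < k then M j k else 0) else 0)
              - (if k = b then (if z < j ∧ j < k then M j k else 0) else 0) := by
        intro j k
        rw [Ymat_apply]
        simp only [Fin.lt_def, Fin.ext_iff, hzv, true_and] at hbz ⊢
        split_ifs <;> (first | ring1 | omega)
      simp only [step]
      simp only [Finset.sum_sub_distrib]
      rw [Finset.sum_comm (f := fun j k =>
        (if k = b then (if z < j ∧ j < k then M j k else 0) else 0))]
      have pull : ∀ (g : Fin n → Fin n → ℤ) (c : Fin n),
          (∑ j, ∑ k, (if j = c then g j k else 0)) = ∑ k, g c k := by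
        intro g c
        rw [Finset.sum_eq_single c]
        · simp
        · intro j _ hj; simp [hj]
        · intro h; exact absurd (Finset.mem_univ c) h
      rw [pull, pull]
      -- now a single-index computation
      have merge : ∀ c : Fin n,
          (if z < b ∧ b < c then M b c else 0) - (if z < c ∧ c < b then M c b else 0)
            = M b c - (if c = z then M b c else 0) - (if c = b then M b c else 0) := by
        intro c
        have hcb := hskew b c
        have hd := hdiag b
        simp only [Fin.lt_def, Fin.ext_iff, hzv, true_and] at hbz ⊢
        split_ifs <;> (first | ring1 | omega)
      rw [← Finset.sum_sub_distrib]
      simp only [merge]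
      rw [Finset.sum_sub_distrib, Finset.sum_sub_distrib, hrow b,
        Finset.sum_ite_eq' Finset.univ z (fun c => M b c),
        Finset.sum_ite_eq' Finset.univ b (fun c => M b c)]
      simp [hdiag b, hskew b z]
    · -- z < a < b
      have hav : (a : ℕ) ≠ 0 := by
        intro h; exact ha (Fin.ext (by simp [h, hzv]))
      have haz : z < a := by rw [Fin.lt_def, hzv]; omega
      rw [Finset.sum_eq_single a]
      · rw [Finset.sum_eq_single b]
        · rw [Ymat_apply]
          simp [haz, hab, hab.ne, hab.ne', haz.ne, haz.ne', (haz.trans hab).ne,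
            (haz.trans hab).ne']
        · intro k _ hk
          split_ifs with h
          · rw [Ymat_apply]
            simp only [Fin.lt_def, Fin.ext_iff, hzv, true_and] at haz hab h ⊢
            have hkv : (k : ℕ) ≠ (b : ℕ) := fun hh => hk (Fin.ext hh)
            split_ifs <;> (first | ring1 | omega)
          · rfl
        · intro h; exact absurd (Finset.mem_univ b) h
      · intro j _ hj
        apply Finset.sum_eq_zero
        intro k _
        split_ifs with h
        · rw [Ymat_apply]
          simp only [Fin.lt_def, Fin.ext_iff, hzv, true_and] at haz hab h ⊢
          have hjv : (j : ℕ) ≠ (a : ℕ) := fun hh => hj (Fin.ext hh)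
          split_ifs <;> (first | ring1 | omega)
        · rfl
      · intro h; exact absurd (Finset.mem_univ a) h
  have hM : M = ∑ j, ∑ k, (if z < j ∧ j < k then M j k • Ymat n z j k else 0) := by
    ext a b
    rw [hN]
    rcases lt_trichotomy a b with h | h | h
    · exact (main a b h).symm
    · subst h
      rw [hdiag a]
      symm
      apply Finset.sum_eq_zero; intro j _
      apply Finset.sum_eq_zero; intro k _
      split_ifs with h
      · rw [Ymat_apply]
        simp only [Fin.lt_def, Fin.ext_iff, hzv, true_and] at h ⊢
        split_ifs <;> (first | ring1 | omega)
      · rfl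
    · have hba := main b a h
      have flip : ∀ j k : Fin n,
          (if z < j ∧ j < k then M j k * Ymat n z j k a b else 0)
            = -(if z < j ∧ j < k then M j k * Ymat n z j k b a else 0) := by
        intro j k
        split_ifs with hc
        · rw [Ymat_skew]; ring
        · simp
      simp only [flip, Finset.sum_neg_distrib]
      rw [hba]
      exact hskew b a
  rw [hM]
  refine Submodule.sum_mem _ fun j _ => Submodule.sum_mem _ fun k _ => ?_
  split_ifs with h
  · exact Submodule.smul_mem _ _ (Submodule.subset_span ⟨z, j, k, h.1, h.2, rfl⟩)
  · exact Submodule.zero_mem _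
end

section
/- For n ≥ 5, every element of G₂ = {M ∈ M_n(ℤ) : M·𝟙 = 0, Mᵀ = -M} is an integer linear combination of commutators ⟨A, B⟩ = AB - BA with A ∈ G₁ and B ∈ G₃, where G₁ = {M : M·𝟙 = 0, Mᵀ = M} and G₃ = {M : M·𝟙 = 0, Mᵀ = M, tr(M) = 0}. That is, the ℤ-span of ⟨G₁, G₃⟩ equals G₂. -/
open Matrix

lemma std_transpose {n : ℕ} (i j : Fin n) (c : ℤ) :
    (Matrix.single i j c)ᵀ = Matrix.single j i c := by
  ext a b; simp [Matrix.single, Matrix.transpose_apply, and_comm]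

lemma X_symm {n : ℕ} (i j : Fin n) : (Xmat n i j)ᵀ = Xmat n i j := by
  simp [Xmat, std_transpose]; abel

lemma X_mulVec {n : ℕ} (i j : Fin n) : (Xmat n i j).mulVec (fun _ => 1) = 0 := by
  ext a
  simp only [Xmat, Matrix.add_mulVec, Matrix.sub_mulVec, single_mulVec,
    Pi.add_apply, Pi.sub_apply, Pi.zero_apply, Function.update, mul_one]
  by_cases hi : a = i <;> by_cases hj : a = j <;> simp [*]

lemma X_trace {n : ℕ} (i j : Fin n) (h : i ≠ j) : (Xmat n i j).trace = 2 := by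
  simp [Xmat, Matrix.trace_single_eq_same, Matrix.trace_single_eq_of_ne _ _ _ h.symm,
    Matrix.trace_single_eq_of_ne _ _ _ h]

lemma XX_comm {n : ℕ} (j k p q : Fin n) (hpj : p ≠ j) (hpk : p ≠ k)
    (hqj : q ≠ j) (hqk : q ≠ k) :
    Xmat n j k * Xmat n p q = Xmat n p q * Xmat n j k := by
  simp only [Xmat, sub_mul, add_mul, mul_sub, mul_add,
    Matrix.single_mul_single_same, Matrix.single_mul_single_of_ne,
    hpj, hpk, hqj, hqk, hpj.symm, hpk.symm, hqj.symm, hqk.symm, Ne, not_false_iff]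

lemma X_bracket {n : ℕ} (i j k : Fin n) (hij : i ≠ j) (hik : i ≠ k) (hjk : j ≠ k) :
    Xmat n j k * Xmat n i j - Xmat n i j * Xmat n j k = Ymat n i j k := by
  simp only [Xmat, Ymat, sub_mul, add_mul, mul_sub, mul_add,
    Matrix.single_mul_single_same, Matrix.single_mul_single_of_ne,
    hij, hik, hjk, hij.symm, hik.symm, hjk.symm, Ne, not_false_iff, mul_one]
  abel

lemma Y_degenerate1 {n : ℕ} (i k : Fin n) : Ymat n i i k = 0 := by
  simp [Ymat]

lemma Y_degenerate2 {n : ℕ} (i k : Fin n) : Ymat n i k k = 0 := by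
  simp [Ymat]

lemma Y_degenerate3 {n : ℕ} (i k : Fin n) : Ymat n k i k = 0 := by
  simp [Ymat]

lemma Y_neg {n : ℕ} (i j k : Fin n) : Ymat n j i k = -Ymat n i j k := by
  simp only [Ymat, neg_add, neg_sub]; abel

lemma exists_pq {n : ℕ} (hn : 5 ≤ n) (i j k : Fin n) :
    ∃ p q : Fin n, p ≠ q ∧ p ≠ i ∧ p ≠ j ∧ p ≠ k ∧ q ≠ i ∧ q ≠ j ∧ q ≠ k := by
  have hcard : 1 < (({i, j, k} : Finset (Fin n))ᶜ).card := by
    have h3 : ({i, j, k} : Finset (Fin n)).card ≤ 3 := by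
      apply le_trans (Finset.card_insert_le _ _)
      simp [Finset.card_insert_le]
      exact Nat.lt_succ_of_le Finset.card_le_two
    have := Finset.card_compl ({i, j, k} : Finset (Fin n))
    simp only [Fintype.card_fin] at this
    omega
  obtain ⟨p, hp, q, hq, hpq⟩ := Finset.one_lt_card.mp hcard
  simp only [Finset.mem_compl, Finset.mem_insert, Finset.mem_singleton, not_or] at hp hq
  exact ⟨p, q, hpq, hp.1, hp.2.1, hp.2.2, hq.1, hq.2.1, hq.2.2⟩

lemma Y_mem {n : ℕ} (hn : 5 ≤ n) (i j k : Fin n) (hij : i ≠ j) (hik : i ≠ k) (hjk : j ≠ k) :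
    Ymat n i j k ∈
      {C | ∃ A B : Matrix (Fin n) (Fin n) ℤ,
        (A.mulVec (fun _ => 1) = 0 ∧ Aᵀ = A) ∧
        (B.mulVec (fun _ => 1) = 0 ∧ Bᵀ = B ∧ B.trace = 0) ∧
        C = A * B - B * A} := by
  obtain ⟨p, q, hpq, hpi, hpj, hpk, hqi, hqj, hqk⟩ := exists_pq hn i j k
  refine ⟨Xmat n j k, Xmat n i j - Xmat n p q,
    ⟨X_mulVec j k, X_symm j k⟩,
    ⟨by rw [Matrix.sub_mulVec, X_mulVec, X_mulVec, sub_zero],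
     by rw [Matrix.transpose_sub, X_symm, X_symm],
     by rw [Matrix.trace_sub, X_trace i j hij, X_trace p q hpq, sub_self]⟩, ?_⟩
  have hc := XX_comm j k p q hpj hpk hqj hqk
  rw [mul_sub, sub_mul, hc]
  rw [show Xmat n j k * Xmat n i j - Xmat n p q * Xmat n j k -
      (Xmat n i j * Xmat n j k - Xmat n p q * Xmat n j k) =
      Xmat n j k * Xmat n i j - Xmat n i j * Xmat n j k by abel,
    X_bracket i j k hij hik hjk]

lemma std_sum {n : ℕ} (i j : Fin n) (g : Fin n → ℤ) :
    ∑ x, Matrix.single i j (g x) = Matrix.single i j (∑ x, g x) := by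
  ext a b
  simp only [Matrix.sum_apply, Matrix.single, Matrix.of_apply]
  split_ifs <;> simp

/-- For `n ≥ 5`, every element of `G₂` (skew matrices killing `𝟙`) is a ℤ-linear
combination of brackets `⟨A,B⟩` with `A ∈ G₁` and `B ∈ G₃`. -/
theorem G2_eq_bracket_G1_G3 (n : ℕ) (hn : 5 ≤ n) (M : Matrix (Fin n) (Fin n) ℤ)
    (h1 : M.mulVec (fun _ => 1) = 0) (h2 : Mᵀ = -M) :
    M ∈ Submodule.span ℤ
      {C | ∃ A B : Matrix (Fin n) (Fin n) ℤ,
        (A.mulVec (fun _ => 1) = 0 ∧ Aᵀ = A) ∧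
        (B.mulVec (fun _ => 1) = 0 ∧ Bᵀ = B ∧ B.trace = 0) ∧
        C = A * B - B * A} := by
  set S := {C | ∃ A B : Matrix (Fin n) (Fin n) ℤ,
        (A.mulVec (fun _ => 1) = 0 ∧ Aᵀ = A) ∧
        (B.mulVec (fun _ => 1) = 0 ∧ Bᵀ = B ∧ B.trace = 0) ∧
        C = A * B - B * A} with hS
  have hrow : ∀ i, ∑ j, M i j = 0 := by
    intro i
    have := congrFun h1 i
    simpa [Matrix.mulVec, dotProduct] using this
  have hskew : ∀ i j, M j i = -M i j := by
    intro i j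
    have := congrFun (congrFun h2 i) j
    simpa using this
  have hcol : ∀ j, ∑ i, M i j = 0 := by
    intro j
    have : ∑ i, M i j = -∑ i, M j i := by
      rw [← Finset.sum_neg_distrib]
      exact Finset.sum_congr rfl fun i _ => by rw [hskew]
    rw [this, hrow, neg_zero]
  have hdiag : ∀ i, M i i = 0 := fun i => by have := hskew i i; omega
  have hpos : 0 < n := by omega
  set e : Fin n := ⟨0, hpos⟩ with he
  set f : Fin n → Fin n → Matrix (Fin n) (Fin n) ℤ :=
    fun i j => (M i j) • Ymat n i j e with hf
  -- full sum
  have hfull : ∑ i, ∑ j, f i j = M + M := by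
    have expand : ∀ i j, f i j =
        Matrix.single i j (M i j) - Matrix.single j i (M i j)
        - Matrix.single i e (M i j) + Matrix.single e i (M i j)
        + Matrix.single j e (M i j) - Matrix.single e j (M i j) := by
      intro i j
      simp only [hf, Ymat, smul_sub, smul_add, Matrix.smul_single, smul_eq_mul, mul_one]
      abel
    calc ∑ i, ∑ j, f i j
        = (∑ i, ∑ j, Matrix.single i j (M i j))
          - (∑ i, ∑ j, Matrix.single j i (M i j))
          - (∑ i, ∑ j, Matrix.single i e (M i j))
          + (∑ i, ∑ j, Matrix.single e i (M i j))
          + (∑ i, ∑ j, Matrix.single j e (M i j))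
          - (∑ i, ∑ j, Matrix.single e j (M i j)) := by
          simp only [expand]
          simp [Finset.sum_add_distrib, Finset.sum_sub_distrib]
      _ = M + M := by
          have t1 : (∑ i, ∑ j, Matrix.single i j (M i j)) = M :=
            (Matrix.matrix_eq_sum_single M).symm
          have t2 : (∑ i, ∑ j, Matrix.single j i (M i j)) = -M := by
            rw [Finset.sum_comm]
            have : ∀ j i : Fin n, Matrix.single j i (M i j)
                = Matrix.single j i (Mᵀ j i) := by
              intro j i; rw [Matrix.transpose_apply]
            calc ∑ j, ∑ i, Matrix.single j i (M i j)
                = ∑ j, ∑ i, Matrix.single j i (Mᵀ j i) := by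
                  exact Finset.sum_congr rfl fun j _ =>
                    Finset.sum_congr rfl fun i _ => this j i
              _ = Mᵀ := (Matrix.matrix_eq_sum_single Mᵀ).symm
              _ = -M := h2
          have t3 : (∑ i, ∑ j, Matrix.single i e (M i j)) = 0 := by
            refine Finset.sum_eq_zero fun i _ => ?_
            rw [std_sum, hrow, Matrix.single_zero]
          have t4 : (∑ i, ∑ j, Matrix.single e i (M i j)) = 0 := by
            refine Finset.sum_eq_zero fun i _ => ?_
            rw [std_sum, hrow, Matrix.single_zero]
          have t5 : (∑ i, ∑ j, Matrix.single j e (M i j)) = 0 := by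
            rw [Finset.sum_comm]
            refine Finset.sum_eq_zero fun j _ => ?_
            rw [std_sum, hcol, Matrix.single_zero]
          have t6 : (∑ i, ∑ j, Matrix.single e j (M i j)) = 0 := by
            rw [Finset.sum_comm]
            refine Finset.sum_eq_zero fun j _ => ?_
            rw [std_sum, hcol, Matrix.single_zero]
          rw [t1, t2, t3, t4, t5, t6]
          abel
  -- split the sum by order
  have hsym : ∀ i j, f j i = f i j := by
    intro i j
    simp only [hf]
    rw [hskew, Y_neg, neg_smul, smul_neg, neg_neg]
  have hfdiag : ∀ i, f i i = 0 := by
    intro i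
    simp only [hf, hdiag, zero_smul]
  have htri : ∀ i j : Fin n, f i j =
      (if i < j then f i j else 0) + (if j < i then f i j else 0)
        + (if i = j then f i j else 0) := by
    intro i j
    rcases lt_trichotomy i j with h | h | h
    · simp [h, h.ne, h.not_gt]
    · simp [h]
    · simp [h, h.ne', h.not_gt]
  have hsplit : ∑ i, ∑ j, f i j =
      (∑ i, ∑ j, if i < j then f i j else 0)
      + (∑ i, ∑ j, if j < i then f i j else 0)
      + (∑ i, ∑ j, if i = j then f i j else 0) := by
    simp only [← Finset.sum_add_distrib]
    exact Finset.sum_congr rfl fun i _ => Finset.sum_congr rfl fun j _ => htri i j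
  have hB : (∑ i, ∑ j, if j < i then f i j else 0)
      = (∑ i, ∑ j, if i < j then f i j else 0) := by
    rw [Finset.sum_comm]
    exact Finset.sum_congr rfl fun i _ => Finset.sum_congr rfl fun j _ => by
      rw [hsym]
  have hC : (∑ i, ∑ j, if i = j then f i j else 0) = 0 := by
    refine Finset.sum_eq_zero fun i _ => ?_
    rw [Finset.sum_ite_eq _ i (f i), if_pos (Finset.mem_univ i), hfdiag]
  set T : Matrix (Fin n) (Fin n) ℤ := ∑ i, ∑ j, if i < j then f i j else 0 with hT
  have h2T : T + T = M + M := by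
    rw [← hfull, hsplit, hB, hC, add_zero]
  have hTM : T = M := by
    ext a b
    have h := congrFun (congrFun h2T a) b
    simp only [Matrix.add_apply] at h
    omega
  rw [← hTM, hT]
  refine Submodule.sum_mem _ fun i _ => Submodule.sum_mem _ fun j _ => ?_
  by_cases hij : i < j
  · rw [if_pos hij]
    by_cases hie : i = e
    · subst hie
      simp only [hf, Y_degenerate3, smul_zero]
      exact Submodule.zero_mem _
    by_cases hje : j = e
    · subst hje
      simp only [hf, Y_degenerate2, smul_zero]
      exact Submodule.zero_mem _
    · exact Submodule.smul_mem _ _ (Submodule.subset_span (Y_mem hn i j e hij.ne hie hje))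
  · rw [if_neg hij]
    exact Submodule.zero_mem _
end
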